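/- arXiv:1802.07230 — 5 statements merged into one kernel-verified Lean document; each statement's English description precedes it below -/
import Mathlib

section
/- Let a > 0 and let φ ∈ L^1(]-a,a[). Then ‖φ^o‖_{L^1} < ‖φ‖_{L^1} if and only if |φ^o(x)| < |φ^e(x)| on a subset of ]-a,a[ of positive measure. -/
open MeasureTheory Set ENNReal

lemma abs_half_le_aux (u v : ℝ) : |(u - v) / 2| ≤ (|u| + |v|) / 2 := by
  rcases abs_cases u with ⟨hu, hu'⟩ | ⟨hu, hu'⟩ <;>
  rcases abs_cases v with ⟨hv, hv'⟩ | ⟨hv, hv'⟩ <;>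
  rcases abs_cases ((u - v) / 2) with ⟨h1, h1'⟩ | ⟨h1, h1'⟩ <;>
  linarith

lemma abs_half_lt_iff_aux (u v : ℝ) :
    |(u - v) / 2| < (|u| + |v|) / 2 ↔ |(u - v) / 2| < |(u + v) / 2| := by
  rcases abs_cases u with ⟨hu, hu'⟩ | ⟨hu, hu'⟩ <;>
  rcases abs_cases v with ⟨hv, hv'⟩ | ⟨hv, hv'⟩ <;>
  rcases abs_cases ((u - v) / 2) with ⟨h1, h1'⟩ | ⟨h1, h1'⟩ <;>
  rcases abs_cases ((u + v) / 2) with ⟨h2, h2'⟩ | ⟨h2, h2'⟩ <;>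
  constructor <;> intro h <;> linarith

lemma oddPart_core {μ : Measure ℝ} (ψ : ℝ → ℝ) (hψ : Measurable ψ)
    (hneg : MeasurePreserving (fun x : ℝ => -x) μ μ)
    (hint : ∫⁻ x, ENNReal.ofReal |ψ x| ∂μ ≠ ⊤) :
    ∫⁻ x, ENNReal.ofReal |(ψ x - ψ (-x)) / 2| ∂μ < ∫⁻ x, ENNReal.ofReal |ψ x| ∂μ ↔
      0 < μ {x | |(ψ x - ψ (-x)) / 2| < |(ψ x + ψ (-x)) / 2|} := by
  set Φ : ℝ → ℝ≥0∞ := fun x => ENNReal.ofReal |ψ x| with hΦ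
  set G : ℝ → ℝ≥0∞ := fun x => ENNReal.ofReal ((|ψ x| + |ψ (-x)|) / 2) with hGdef
  set F : ℝ → ℝ≥0∞ := fun x => ENNReal.ofReal |(ψ x - ψ (-x)) / 2| with hFdef
  have hΦm : Measurable Φ := (hψ.abs).ennreal_ofReal
  have hGm : Measurable G := by
    apply Measurable.ennreal_ofReal
    exact ((hψ.abs.add ((hψ.comp measurable_neg).abs)).div_const 2)
  have hGpt : ∀ x, G x = (Φ x + Φ (-x)) * 2⁻¹ := by
    intro x
    show ENNReal.ofReal ((|ψ x| + |ψ (-x)|) / 2)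
        = (ENNReal.ofReal |ψ x| + ENNReal.ofReal |ψ (-x)|) * 2⁻¹
    rw [ENNReal.ofReal_div_of_pos two_pos, ENNReal.ofReal_add (abs_nonneg _) (abs_nonneg _)]
    simp [div_eq_mul_inv]
  have hG : ∫⁻ x, G x ∂μ = ∫⁻ x, Φ x ∂μ := by
    calc ∫⁻ x, G x ∂μ = ∫⁻ x, (Φ x + Φ (-x)) * 2⁻¹ ∂μ := by simp_rw [hGpt]
      _ = (∫⁻ x, Φ x + Φ (-x) ∂μ) * 2⁻¹ :=
          lintegral_mul_const _ (hΦm.add (hΦm.comp measurable_neg))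
      _ = ((∫⁻ x, Φ x ∂μ) + ∫⁻ x, Φ (-x) ∂μ) * 2⁻¹ := by
          rw [lintegral_add_left hΦm]
      _ = ((∫⁻ x, Φ x ∂μ) + ∫⁻ x, Φ x ∂μ) * 2⁻¹ := by
          rw [hneg.lintegral_comp hΦm]
      _ = (∫⁻ x, Φ x ∂μ) * (2 * 2⁻¹) := by ring
      _ = ∫⁻ x, Φ x ∂μ := by
          rw [ENNReal.mul_inv_cancel two_ne_zero ENNReal.ofNat_ne_top, mul_one]
  have h_le : ∀ x, F x ≤ G x := fun x => ENNReal.ofReal_le_ofReal (abs_half_le_aux _ _)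
  have hset : {x | F x < G x} = {x | |(ψ x - ψ (-x)) / 2| < |(ψ x + ψ (-x)) / 2|} := by
    ext x
    simp only [mem_setOf_eq, hFdef, hGdef]
    rw [ENNReal.ofReal_lt_ofReal_iff_of_nonneg (abs_nonneg _)]
    exact abs_half_lt_iff_aux _ _
  have hFfin : ∫⁻ x, F x ∂μ ≠ ⊤ := by
    refine ne_of_lt (lt_of_le_of_lt (lintegral_mono h_le) ?_)
    rw [hG]
    exact hint.lt_top
  rw [← hG, ← hset]
  constructor
  · intro h
    by_contra h0
    push_neg at h0
    have h0' : μ {x | F x < G x} = 0 := le_antisymm h0 zero_le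
    have hae : F =ᵐ[μ] G := by
      have := (measure_eq_zero_iff_ae_notMem.mp h0')
      filter_upwards [this] with x hx
      exact le_antisymm (h_le x) (not_lt.mp hx)
    rw [lintegral_congr_ae hae] at h
    exact lt_irrefl _ h
  · intro h
    exact lintegral_strict_mono_of_ae_le_of_ae_lt_on hGm.aemeasurable hFfin
      (Filter.Eventually.of_forall h_le) (ne_of_gt h) (Filter.Eventually.of_forall fun x hx => hx)

/-- For `φ ∈ L¹(]-a,a[)`, the `L¹` norm of the odd part is strictly smaller than that
of `φ` if and only if `|φ^o| < |φ^e|` on a set of positive measure. -/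
theorem oddPart_eLpNorm_lt_iff (a : ℝ) (ha : 0 < a)
    (φ : ℝ → ℝ) (hφ : MemLp φ 1 (volume.restrict (Ioo (-a) a))) :
    eLpNorm (fun x => (φ x - φ (-x)) / 2) 1 (volume.restrict (Ioo (-a) a)) <
      eLpNorm φ 1 (volume.restrict (Ioo (-a) a)) ↔
    0 < volume {x ∈ Ioo (-a) a |
        |(φ x - φ (-x)) / 2| < |(φ x + φ (-x)) / 2|} := by
  set μ := volume.restrict (Ioo (-a) a) with hμ
  have hpre : (fun x : ℝ => -x) ⁻¹' Ioo (-a) a = Ioo (-a) a := by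
    ext x
    simp only [mem_preimage, mem_Ioo]
    constructor <;> rintro ⟨h1, h2⟩ <;> constructor <;> linarith
  have hmap : Measure.map (fun x : ℝ => -x) μ = μ := by
    rw [hμ]
    calc Measure.map (fun x : ℝ => -x) (volume.restrict (Ioo (-a) a))
        = Measure.map (fun x : ℝ => -x) (volume.restrict ((fun x : ℝ => -x) ⁻¹' Ioo (-a) a)) := by
          rw [hpre]
      _ = (Measure.map (fun x : ℝ => -x) volume).restrict (Ioo (-a) a) :=
          (Measure.restrict_map measurable_neg measurableSet_Ioo).symm
      _ = volume.restrict (Ioo (-a) a) := by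
          rw [show (fun x : ℝ => -x) = Neg.neg from rfl, Measure.map_neg_eq_self]
  have hneg : MeasurePreserving (fun x : ℝ => -x) μ μ := ⟨measurable_neg, hmap⟩
  -- measurable representative
  obtain ⟨ψ, hψm, heq⟩ : ∃ ψ : ℝ → ℝ, Measurable ψ ∧ φ =ᵐ[μ] ψ :=
    ⟨hφ.aestronglyMeasurable.mk φ, hφ.aestronglyMeasurable.stronglyMeasurable_mk.measurable,
      hφ.aestronglyMeasurable.ae_eq_mk⟩
  have heqn : (fun x => φ (-x)) =ᵐ[μ] (fun x => ψ (-x)) :=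
    heq.comp_tendsto hneg.quasiMeasurePreserving.tendsto_ae
  have hoeq : (fun x => (φ x - φ (-x)) / 2) =ᵐ[μ] (fun x => (ψ x - ψ (-x)) / 2) := by
    filter_upwards [heq, heqn] with x h1 h2
    have h2' : φ (-x) = ψ (-x) := h2
    rw [h1, h2']
  have hψint : ∫⁻ x, ENNReal.ofReal |ψ x| ∂μ ≠ ⊤ := by
    have h1 : eLpNorm ψ 1 μ = eLpNorm φ 1 μ := eLpNorm_congr_ae heq.symm
    have h2 : eLpNorm ψ 1 μ < ⊤ := h1 ▸ hφ.2
    rw [eLpNorm_one_eq_lintegral_enorm] at h2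
    simp_rw [Real.enorm_eq_ofReal_abs] at h2
    exact h2.ne
  have key := oddPart_core ψ hψm hneg hψint
  have hL : eLpNorm (fun x => (φ x - φ (-x)) / 2) 1 μ
      = ∫⁻ x, ENNReal.ofReal |(ψ x - ψ (-x)) / 2| ∂μ := by
    rw [eLpNorm_congr_ae hoeq, eLpNorm_one_eq_lintegral_enorm]
    simp_rw [Real.enorm_eq_ofReal_abs]
  have hR : eLpNorm φ 1 μ = ∫⁻ x, ENNReal.ofReal |ψ x| ∂μ := by
    rw [eLpNorm_congr_ae heq, eLpNorm_one_eq_lintegral_enorm]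
    simp_rw [Real.enorm_eq_ofReal_abs]
  have hsetμ : volume {x ∈ Ioo (-a) a | |(φ x - φ (-x)) / 2| < |(φ x + φ (-x)) / 2|}
      = μ {x | |(ψ x - ψ (-x)) / 2| < |(ψ x + ψ (-x)) / 2|} := by
    have h1 : {x ∈ Ioo (-a) a | |(φ x - φ (-x)) / 2| < |(φ x + φ (-x)) / 2|}
        = {x | |(φ x - φ (-x)) / 2| < |(φ x + φ (-x)) / 2|} ∩ Ioo (-a) a := by
      ext x; simp only [mem_sep_iff, mem_inter_iff, mem_setOf_eq]; tauto
    rw [h1, ← Measure.restrict_apply' measurableSet_Ioo, ← hμ]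
    apply measure_congr
    rw [Filter.eventuallyEq_set]
    filter_upwards [heq, heqn] with x h2 h3
    have h3' : φ (-x) = ψ (-x) := h3
    rw [h2, h3']
  rw [hL, hR, hsetμ]
  exact key
end

section
/- Let a > 0 and φ ∈ C^0([-a,a]). Then ‖φ^o‖_{L^∞} < ‖φ‖_{L^∞} if and only if φ^e(x̄) ≠ 0 at every point x̄ ∈ [-a,a] where |φ| attains its maximum. -/
open Set

/-- For continuous `φ` on `[-a,a]`, the sup norm of the odd part is strictly smaller
than the sup norm of `φ` if and only if the even part is nonzero at every point where
`|φ|` attains its maximum. -/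
theorem oddPart_supNorm_lt_iff (a : ℝ) (ha : 0 < a)
    (φ : ℝ → ℝ) (hφ : ContinuousOn φ (Icc (-a) a)) :
    sSup ((fun x => |(φ x - φ (-x)) / 2|) '' Icc (-a) a) <
      sSup ((fun x => |φ x|) '' Icc (-a) a) ↔
    ∀ x ∈ Icc (-a) a, (∀ y ∈ Icc (-a) a, |φ y| ≤ |φ x|) →
      (φ x + φ (-x)) / 2 ≠ 0 := by
  have hne : (Icc (-a) a).Nonempty := nonempty_Icc.mpr (by linarith)
  have hnegmem : ∀ x ∈ Icc (-a) a, -x ∈ Icc (-a) a := by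
    intro x hx
    simp only [mem_Icc] at *
    constructor <;> linarith [hx.1, hx.2]
  set g : ℝ → ℝ := fun x => |(φ x - φ (-x)) / 2| with hg_def
  have hφabs : ContinuousOn (fun x => |φ x|) (Icc (-a) a) := hφ.abs
  have hg : ContinuousOn g (Icc (-a) a) :=
    ((hφ.sub (hφ.comp continuous_neg.continuousOn hnegmem)).div_const 2).abs
  have hbdφ : BddAbove ((fun x => |φ x|) '' Icc (-a) a) :=
    (isCompact_Icc.image_of_continuousOn hφabs).bddAbove
  have hbdg : BddAbove (g '' Icc (-a) a) :=
    (isCompact_Icc.image_of_continuousOn hg).bddAbove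
  set M := sSup ((fun x => |φ x|) '' Icc (-a) a) with hM_def
  set Mo := sSup (g '' Icc (-a) a) with hMo_def
  have hleM : ∀ x ∈ Icc (-a) a, |φ x| ≤ M := fun x hx => le_csSup hbdφ ⟨x, hx, rfl⟩
  have hleMo : ∀ x ∈ Icc (-a) a, g x ≤ Mo := fun x hx => le_csSup hbdg ⟨x, hx, rfl⟩
  have hgleM : ∀ x ∈ Icc (-a) a, g x ≤ M := by
    intro x hx
    have h1 := hleM x hx
    have h2 := hleM (-x) (hnegmem x hx)
    have : |(φ x - φ (-x)) / 2| ≤ (|φ x| + |φ (-x)|) / 2 := by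
      rw [abs_div]
      have := abs_sub (φ x) (φ (-x))
      simp only [abs_two]
      linarith [abs_sub_abs_le_abs_sub (φ x) (φ (-x)), abs_sub (φ x) (φ (-x))]
    calc g x ≤ (|φ x| + |φ (-x)|) / 2 := this
      _ ≤ M := by linarith
  have hMoM : Mo ≤ M := csSup_le (hne.image g) (by rintro _ ⟨x, hx, rfl⟩; exact hgleM x hx)
  constructor
  · intro h x hx hmax heq
    -- even part zero at a max point forces Mo ≥ M
    have hMx : M ≤ |φ x| := csSup_le (hne.image _) (by rintro _ ⟨y, hy, rfl⟩; exact hmax y hy)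
    have hveq : φ (-x) = -φ x := by
      have : φ x + φ (-x) = 0 := by
        field_simp at heq; linarith
      linarith
    have hval : (φ x - φ (-x)) / 2 = φ x := by rw [hveq]; ring
    have hgx : g x = |φ x| := by simp only [hg_def, hval]
    have : M ≤ Mo := by
      calc M ≤ |φ x| := hMx
        _ = g x := hgx.symm
        _ ≤ Mo := hleMo x hx
    linarith
  · intro h
    rcases lt_or_eq_of_le hMoM with hlt | heq
    · exact hlt
    · exfalso
      -- M > 0
      obtain ⟨x₀, hx₀, hx₀max⟩ := isCompact_Icc.exists_isMaxOn hne hφabs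
      have hMx₀ : |φ x₀| = M :=
        le_antisymm (hleM x₀ hx₀) (csSup_le (hne.image _) (by rintro _ ⟨y, hy, rfl⟩; exact hx₀max hy))
      have hMpos : 0 < M := by
        rcases lt_or_eq_of_le (abs_nonneg (φ x₀)) with h0 | h0
        · linarith [hMx₀]
        · exfalso
          apply h x₀ hx₀ (fun y hy => hx₀max hy)
          have h1 : φ x₀ = 0 := abs_eq_zero.mp h0.symm
          have h2 : |φ (-x₀)| ≤ M := hleM _ (hnegmem _ hx₀)
          have h3 : φ (-x₀) = 0 := by
            have hM0 : M = 0 := by rw [← hMx₀, ← h0]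
            have : |φ (-x₀)| = 0 := le_antisymm (by linarith) (abs_nonneg _)
            exact abs_eq_zero.mp this
          rw [h1, h3]; norm_num
      -- g attains its max at some x̄
      obtain ⟨z, hz, hzmax⟩ := isCompact_Icc.exists_isMaxOn hne hg
      have hgz : g z = M := by
        refine le_antisymm (hgleM z hz) ?_
        calc M = Mo := heq.symm
          _ ≤ g z := csSup_le (hne.image g) (by rintro _ ⟨y, hy, rfl⟩; exact hzmax hy)
      have hu := abs_le.mp (hleM z hz)
      have hv := abs_le.mp (hleM (-z) (hnegmem z hz))
      have habs : |φ z - φ (-z)| = 2 * M := by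
        have : |(φ z - φ (-z)) / 2| = M := hgz
        rw [abs_div, abs_two] at this
        linarith
      have hcases : φ z - φ (-z) = 2 * M ∨ φ z - φ (-z) = -(2 * M) :=
        (abs_eq (le_of_lt (by linarith : (0:ℝ) < 2 * M))).mp habs
      have hsum : φ z + φ (-z) = 0 ∧ |φ z| = M := by
        rcases hcases with hc | hc
        · constructor <;> [linarith; (rw [abs_of_nonneg (by linarith)]; linarith)]
        · constructor <;> [linarith; (rw [abs_of_nonpos (by linarith)]; linarith)]
      refine h z hz (fun y hy => ?_) (by rw [div_eq_zero_iff]; left; exact hsum.1)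
      rw [hsum.2]; exact hleM y hy
end

section
/- Let m be a positive integer and g(x) = sin(mx) + sin(3mx) on ]0,π[. Then ∫₀^π |g(x)| dx = 8/3. -/
open intervalIntegral

lemma sin_three_identity (u : ℝ) :
    Real.sin u + Real.sin (3 * u) = 4 * Real.sin u * Real.cos u ^ 2 := by
  rw [Real.sin_three_mul]
  linear_combination (-4 * Real.sin u) * Real.sin_sq_add_cos_sq u

lemma f_cont : Continuous (fun u : ℝ => 4 * |Real.sin u| * Real.cos u ^ 2) := by
  continuity

lemma f_periodic : Function.Periodic (fun u : ℝ => 4 * |Real.sin u| * Real.cos u ^ 2) Real.pi := by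
  intro u
  simp [Real.sin_add_pi, Real.cos_add_pi, abs_neg]

lemma f_integral_pi :
    ∫ u in (0:ℝ)..Real.pi, 4 * |Real.sin u| * Real.cos u ^ 2 = 8 / 3 := by
  have h1 : ∫ u in (0:ℝ)..Real.pi, 4 * |Real.sin u| * Real.cos u ^ 2
      = ∫ u in (0:ℝ)..Real.pi, 4 * Real.sin u * Real.cos u ^ 2 := by
    apply intervalIntegral.integral_congr
    intro x hx
    rw [Set.uIcc_of_le Real.pi_pos.le] at hx
    dsimp only
    rw [abs_of_nonneg (Real.sin_nonneg_of_nonneg_of_le_pi hx.1 hx.2)]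
  rw [h1]
  have h2 : ∀ x ∈ Set.uIcc (0:ℝ) Real.pi, HasDerivAt (fun u => -(4/3) * Real.cos u ^ 3)
      (4 * Real.sin x * Real.cos x ^ 2) x := by
    intro x _
    have := ((Real.hasDerivAt_cos x).pow 3).const_mul (-(4/3) : ℝ)
    convert this using 1
    · rfl
    · rfl
    · rfl
    · push_cast; ring
  rw [intervalIntegral.integral_eq_sub_of_hasDerivAt h2
    (by apply Continuous.intervalIntegrable; continuity)]
  simp
  ring

/-- For any positive integer `m`, `∫₀^π |sin(mx) + sin(3mx)| dx = 8/3`. -/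
theorem integral_abs_sin_add_sin_three (m : ℕ) (hm : 0 < m) :
    ∫ x in (0:ℝ)..Real.pi, |Real.sin (m * x) + Real.sin (3 * m * x)| = 8 / 3 := by
  have hm' : (m:ℝ) ≠ 0 := Nat.cast_ne_zero.mpr hm.ne'
  have hcongr : ∀ x : ℝ, |Real.sin (m * x) + Real.sin (3 * m * x)|
      = 4 * |Real.sin ((m:ℝ) * x)| * Real.cos ((m:ℝ) * x) ^ 2 := by
    intro x
    have : (3:ℝ) * m * x = 3 * ((m:ℝ) * x) := by ring
    rw [this, sin_three_identity, abs_mul, abs_mul, abs_pow, sq_abs]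
    norm_num
  simp only [hcongr]
  rw [intervalIntegral.integral_comp_mul_left (fun u => 4 * |Real.sin u| * Real.cos u ^ 2) hm']
  have hint : ∀ t₁ t₂ : ℝ, IntervalIntegrable (fun u => 4 * |Real.sin u| * Real.cos u ^ 2)
      MeasureTheory.MeasureSpace.volume t₁ t₂ := fun t₁ t₂ => f_cont.intervalIntegrable t₁ t₂
  have := f_periodic.intervalIntegral_add_zsmul_eq (m : ℤ) 0 hint
  simp only [zero_add, zsmul_eq_mul, Int.cast_natCast, mul_zero] at this ⊢
  rw [this, f_integral_pi, smul_eq_mul]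
  field_simp
end

section
/- Let ℓ > 0, α > 0 and set K_α := α/(2 C sinh(αℓ)) for a constant C > 0, and let v ∈ C¹([-ℓ,ℓ]). Then ∫_{-ℓ}^{ℓ} K_α e^{αy} v(y) dy → v(ℓ)/C as α → +∞. -/
open Filter

lemma integral_exp_mul' (c a b : ℝ) (hc : c ≠ 0) :
    ∫ x in a..b, Real.exp (c * x) = (Real.exp (c * b) - Real.exp (c * a)) / c := by
  have D : ∀ x : ℝ, HasDerivAt (fun y : ℝ => Real.exp (c * y) / c) (Real.exp (c * x)) x := by
    intro x
    have := ((Real.hasDerivAt_exp (c * x)).comp x ((hasDerivAt_id x).const_mul c))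
    simpa [mul_comm, mul_div_assoc, mul_div_cancel_left₀ _ hc] using this.div_const c
  rw [intervalIntegral.integral_eq_sub_of_hasDerivAt (fun x _ => D x)
    ((Real.continuous_exp.comp (continuous_const.mul continuous_id)).intervalIntegrable a b)]
  ring

-- Lipschitz-type bound
lemma lip_bound (ℓ : ℝ) (hℓ : 0 < ℓ) (v : ℝ → ℝ) (hv : ContDiffOn ℝ 1 v (Set.Icc (-ℓ) ℓ)) :
    ∃ L : ℝ, 0 ≤ L ∧ ∀ y ∈ Set.Icc (-ℓ) ℓ, |v y - v ℓ| ≤ L * (ℓ - y) := by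
  have hconv : Convex ℝ (Set.Icc (-ℓ : ℝ) ℓ) := convex_Icc _ _
  have hu : UniqueDiffOn ℝ (Set.Icc (-ℓ : ℝ) ℓ) :=
    uniqueDiffOn_Icc (by linarith)
  have hcont : ContinuousOn (fun y => fderivWithin ℝ v (Set.Icc (-ℓ) ℓ) y)
      (Set.Icc (-ℓ) ℓ) := hv.continuousOn_fderivWithin hu le_rfl
  obtain ⟨M, hM⟩ := (isCompact_Icc).exists_bound_of_continuousOn hcont
  have hdiff : DifferentiableOn ℝ v (Set.Icc (-ℓ) ℓ) := hv.differentiableOn one_ne_zero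
  have hlip : LipschitzOnWith (Real.toNNReal M) v (Set.Icc (-ℓ) ℓ) := by
    apply hconv.lipschitzOnWith_of_nnnorm_fderivWithin_le hdiff
    intro x hx
    have := hM x hx
    simp only [← NNReal.coe_le_coe, coe_nnnorm, Real.coe_toNNReal']
    exact le_trans this (le_max_left _ _)
  refine ⟨M ⊔ 0, le_max_right _ _, fun y hy => ?_⟩
  have := hlip.dist_le_mul y hy ℓ (Set.right_mem_Icc.2 (by linarith))
  rw [Real.dist_eq, Real.dist_eq] at this
  have hy2 : |y - ℓ| = ℓ - y := by rw [abs_sub_comm]; exact abs_of_nonneg (by linarith [hy.2])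
  rw [hy2] at this
  simpa [Real.coe_toNNReal'] using this

/-- Concentration of the normalized exponential profile at the upper endpoint:
for `v ∈ C¹([-ℓ,ℓ])`, `∫_{-ℓ}^{ℓ} K_α e^{αy} v(y) dy → v(ℓ)/C` as `α → ∞`, where
`K_α = α/(2C sinh(αℓ))`. -/
theorem exp_profile_concentrates (ℓ C : ℝ) (hℓ : 0 < ℓ) (hC : 0 < C)
    (v : ℝ → ℝ) (hv : ContDiffOn ℝ 1 v (Set.Icc (-ℓ) ℓ)) :
    Tendsto (fun α : ℝ =>
        ∫ y in (-ℓ)..ℓ, (α / (2 * C * Real.sinh (α * ℓ))) * Real.exp (α * y) * v y)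
      atTop (nhds (v ℓ / C)) := by
  obtain ⟨L, hL0, hLip⟩ := lip_bound ℓ hℓ v hv
  have hvc : ContinuousOn v (Set.Icc (-ℓ) ℓ) := hv.continuousOn
  have huIcc : Set.uIcc (-ℓ) ℓ = Set.Icc (-ℓ) ℓ := Set.uIcc_of_le (by linarith)
  rw [tendsto_iff_norm_sub_tendsto_zero]
  apply squeeze_zero' (g := fun α => 8 * L / (C * α))
    (Filter.Eventually.of_forall fun α => norm_nonneg _)
  · rw [eventually_atTop]
    refine ⟨max 1 (1/ℓ), fun α hα => ?_⟩
    have hα1 : (1:ℝ) ≤ α := le_trans (le_max_left _ _) hα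
    have hα0 : 0 < α := by linarith
    have hαℓ : 1 ≤ α * ℓ := by
      have h2 : 1/ℓ ≤ α := le_trans (le_max_right _ _) hα
      calc (1:ℝ) = (1/ℓ) * ℓ := by field_simp
        _ ≤ α * ℓ := by apply mul_le_mul_of_nonneg_right h2 hℓ.le
    have hsinh : Real.exp (α * ℓ) / 4 ≤ Real.sinh (α * ℓ) := by
      rw [Real.sinh_eq]
      have h1 : Real.exp (-(α * ℓ)) ≤ Real.exp (α * ℓ) / 4 := by
        have hx : (2:ℝ) ≤ Real.exp (α * ℓ) := by linarith [Real.add_one_le_exp (α * ℓ)]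
        have hprod : Real.exp (-(α * ℓ)) * Real.exp (α * ℓ) = 1 := by
          rw [← Real.exp_add]; simp
        nlinarith [Real.exp_pos (-(α * ℓ))]
      linarith [Real.exp_pos (α * ℓ)]
    have hsinh0 : 0 < Real.sinh (α * ℓ) :=
      lt_of_lt_of_le (by positivity) hsinh
    obtain ⟨K, hK⟩ : ∃ K', K' = α / (2 * C * Real.sinh (α * ℓ)) := ⟨_, rfl⟩
    simp only [show α / (2 * C * Real.sinh (α * ℓ)) = K from hK.symm]
    have hK0 : 0 < K := by rw [hK]; positivity
    -- integrability
    have hcont1 : ContinuousOn (fun y => K * Real.exp (α * y) * v y) (Set.uIcc (-ℓ) ℓ) := by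
      rw [huIcc]
      exact ((continuousOn_const.mul ((Real.continuous_exp.comp
        (continuous_const.mul continuous_id)).continuousOn)).mul hvc)
    have hint1 : IntervalIntegrable (fun y => K * Real.exp (α * y) * v y)
        MeasureTheory.volume (-ℓ) ℓ := hcont1.intervalIntegrable
    have hint2 : IntervalIntegrable (fun y => K * Real.exp (α * y) * v ℓ)
        MeasureTheory.volume (-ℓ) ℓ := by
      apply Continuous.intervalIntegrable
      exact (continuous_const.mul (Real.continuous_exp.comp
        (continuous_const.mul continuous_id))).mul continuous_const
    -- the normalization: ∫ K e^{αy} v ℓ = v ℓ / C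
    have hnorm : (∫ y in (-ℓ)..ℓ, K * Real.exp (α * y) * v ℓ) = v ℓ / C := by
      have : (∫ y in (-ℓ)..ℓ, Real.exp (α * y))
          = (Real.exp (α * ℓ) - Real.exp (α * (-ℓ))) / α :=
        integral_exp_mul' α (-ℓ) ℓ (ne_of_gt hα0)
      rw [show (fun y => K * Real.exp (α * y) * v ℓ)
          = (fun y => (K * v ℓ) * Real.exp (α * y)) by funext y; ring,
        intervalIntegral.integral_const_mul, this, hK, Real.sinh_eq]
      rw [mul_comm α (-ℓ), neg_mul, mul_comm ℓ α]
      have hd : (0:ℝ) < Real.exp (α*ℓ) - Real.exp (-(α*ℓ)) := by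
        have h5 := hsinh0; rw [Real.sinh_eq] at h5; linarith
      field_simp [hd.ne', hα0.ne', hC.ne']
    have hdiffeq : (∫ y in (-ℓ)..ℓ, K * Real.exp (α * y) * v y) - v ℓ / C
        = ∫ y in (-ℓ)..ℓ, K * Real.exp (α * y) * (v y - v ℓ) := by
      rw [← hnorm, ← intervalIntegral.integral_sub hint1 hint2]
      congr 1; funext y; ring
    rw [Real.norm_eq_abs, hdiffeq]
    have hab : (-ℓ : ℝ) ≤ ℓ := by linarith
    calc |∫ y in (-ℓ)..ℓ, K * Real.exp (α * y) * (v y - v ℓ)|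
        ≤ ∫ y in (-ℓ)..ℓ, |K * Real.exp (α * y) * (v y - v ℓ)| :=
          intervalIntegral.abs_integral_le_integral_abs hab
      _ ≤ ∫ y in (-ℓ)..ℓ, (K * L * (2/α) * Real.exp (α*ℓ/2)) * Real.exp ((α/2) * y) := by
          apply intervalIntegral.integral_mono_on hab
          · apply IntervalIntegrable.abs
            apply ContinuousOn.intervalIntegrable
            rw [huIcc]
            exact (continuousOn_const.mul ((Real.continuous_exp.comp
              (continuous_const.mul continuous_id)).continuousOn)).mul (hvc.sub continuousOn_const)
          · apply Continuous.intervalIntegrable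
            exact continuous_const.mul (Real.continuous_exp.comp
              (continuous_const.mul continuous_id))
          · intro y hy
            have hyℓ : y ≤ ℓ := hy.2
            have key : (ℓ - y) * Real.exp (α * y) ≤ (2/α) * Real.exp (α*ℓ/2) * Real.exp ((α/2)*y) := by
              have hsplit : Real.exp (α * y)
                  = Real.exp (α*ℓ/2) * Real.exp ((α/2)*y) * Real.exp (-(α * (ℓ - y)/2)) := by
                rw [← Real.exp_add, ← Real.exp_add]; congr 1; ring
              rw [hsplit]
              have hs0 : 0 ≤ α * (ℓ - y) / 2 :=
                div_nonneg (mul_nonneg hα0.le (sub_nonneg.2 hyℓ)) (by norm_num)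
              have hse : α * (ℓ - y) / 2 ≤ Real.exp (α * (ℓ - y) / 2) := by
                linarith [Real.add_one_le_exp (α * (ℓ - y) / 2)]
              have hsexp : (ℓ - y) * Real.exp (-(α * (ℓ - y)/2)) ≤ 2/α := by
                have h3 : (ℓ - y) ≤ (2/α) * Real.exp (α * (ℓ - y)/2) := by
                  rw [div_mul_eq_mul_div, le_div_iff₀ hα0]
                  linarith
                calc (ℓ - y) * Real.exp (-(α * (ℓ - y)/2))
                    ≤ ((2/α) * Real.exp (α * (ℓ - y)/2)) * Real.exp (-(α * (ℓ - y)/2)) :=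
                      mul_le_mul_of_nonneg_right h3 (Real.exp_pos _).le
                  _ = 2/α := by rw [mul_assoc, ← Real.exp_add]; simp
              calc (ℓ - y) * (Real.exp (α*ℓ/2) * Real.exp ((α/2)*y) * Real.exp (-(α * (ℓ - y)/2)))
                  = ((ℓ - y) * Real.exp (-(α * (ℓ - y)/2))) * (Real.exp (α*ℓ/2) * Real.exp ((α/2)*y)) := by ring
                _ ≤ (2/α) * (Real.exp (α*ℓ/2) * Real.exp ((α/2)*y)) := by
                    apply mul_le_mul_of_nonneg_right hsexp (by positivity)
                _ = (2/α) * Real.exp (α*ℓ/2) * Real.exp ((α/2)*y) := by ring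
            have habs : |K * Real.exp (α * y) * (v y - v ℓ)|
                = K * Real.exp (α * y) * |v y - v ℓ| := by
              rw [abs_mul, abs_of_nonneg (mul_pos hK0 (Real.exp_pos _)).le]
            rw [habs]
            calc K * Real.exp (α * y) * |v y - v ℓ|
                ≤ K * Real.exp (α * y) * (L * (ℓ - y)) := by
                  exact mul_le_mul_of_nonneg_left (hLip y hy)
                    (mul_pos hK0 (Real.exp_pos _)).le
              _ = (K * L) * ((ℓ - y) * Real.exp (α * y)) := by ring
              _ ≤ (K * L) * ((2/α) * Real.exp (α*ℓ/2) * Real.exp ((α/2)*y)) :=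
                  mul_le_mul_of_nonneg_left key (mul_nonneg hK0.le hL0)
              _ = (K * L * (2/α) * Real.exp (α*ℓ/2)) * Real.exp ((α/2) * y) := by ring
      _ = (K * L * (2/α) * Real.exp (α*ℓ/2)) * ((Real.exp ((α/2)*ℓ) - Real.exp ((α/2)*(-ℓ)))/(α/2)) := by
          rw [intervalIntegral.integral_const_mul, integral_exp_mul' (α/2) (-ℓ) ℓ (by positivity)]
      _ ≤ (K * L * (2/α) * Real.exp (α*ℓ/2)) * (Real.exp ((α/2)*ℓ)/(α/2)) := by
          have hsub : (Real.exp ((α/2)*ℓ) - Real.exp ((α/2)*(-ℓ)))/(α/2) ≤ Real.exp ((α/2)*ℓ)/(α/2) := by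
            gcongr
            linarith [Real.exp_pos ((α/2) * (-ℓ))]
          exact mul_le_mul_of_nonneg_left hsub
            (mul_nonneg (mul_nonneg (mul_nonneg hK0.le hL0) (by positivity)) (Real.exp_pos _).le)
      _ ≤ 8 * L / (C * α) := by
          have hEE : Real.exp (α*ℓ/2) * Real.exp ((α/2)*ℓ) = Real.exp (α*ℓ) := by
            rw [← Real.exp_add]; ring_nf
          have hCne := hC.ne'
          have hαne := hα0.ne'
          have hSne := hsinh0.ne'
          have key2 : K * L * (2/α) * Real.exp (α*ℓ/2) * (Real.exp ((α/2)*ℓ)/(α/2))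
              = 2 * L * Real.exp (α*ℓ) / (C * α * Real.sinh (α*ℓ)) := by
            rw [hK, ← hEE]; field_simp [hCne, hαne, hSne]
          rw [key2, div_le_div_iff₀ (by positivity) (by positivity)]
          have h4 : 0 ≤ L * C * α * (4 * Real.sinh (α*ℓ) - Real.exp (α*ℓ)) := by
            apply mul_nonneg (by positivity); linarith
          nlinarith [h4]
  · have h := (tendsto_inv_atTop_zero : Tendsto (fun r : ℝ => r⁻¹) atTop (nhds 0)).const_mul (8 * L / C)
    rw [mul_zero] at h
    convert h using 2 with α
    ring
end

section
/- Let ℓ > 0, α > 0 with cosh(αℓ) > 1, set R_α := α/(2C(cosh(αℓ)-1)) for a constant C > 0, and let v ∈ C¹([-ℓ,ℓ]). Then ∫_{-ℓ}^{ℓ} R_α sinh(αy) v(y) dy → (v(ℓ) - v(-ℓ))/(2C) as α → +∞. -/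
open Filter

/-- Concentration of the odd exponential profile at the two endpoints: for
`v ∈ C¹([-ℓ,ℓ])`, `∫_{-ℓ}^{ℓ} R_α sinh(αy) v(y) dy → (v(ℓ) - v(-ℓ))/(2C)` as
`α → ∞`, where `R_α = α/(2C(cosh(αℓ)-1))`. -/
theorem sinh_profile_concentrates (ℓ C : ℝ) (hℓ : 0 < ℓ) (hC : 0 < C)
    (v : ℝ → ℝ) (hv : ContDiffOn ℝ 1 v (Set.Icc (-ℓ) ℓ)) :
    Tendsto (fun α : ℝ =>
        ∫ y in (-ℓ)..ℓ,
          (α / (2 * C * (Real.cosh (α * ℓ) - 1))) * Real.sinh (α * y) * v y)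
      atTop (nhds ((v ℓ - v (-ℓ)) / (2 * C))) := by
  have hle : -ℓ ≤ ℓ := by linarith
  have hne : (-ℓ : ℝ) ≠ ℓ := by intro h; linarith
  have huIcc : Set.uIcc (-ℓ) ℓ = Set.Icc (-ℓ) ℓ := Set.uIcc_of_le hle
  set w := derivWithin v (Set.Icc (-ℓ) ℓ) with hw
  have hwc : ContinuousOn w (Set.Icc (-ℓ) ℓ) :=
    hv.continuousOn_derivWithin (uniqueDiffOn_Icc (by linarith)) le_rfl
  obtain ⟨M, hM⟩ := isCompact_Icc.exists_bound_of_continuousOn hwc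
  have hM0 : 0 ≤ M := le_trans (norm_nonneg _) (hM ℓ ⟨hle, le_rfl⟩)
  -- the integral of w against cosh
  set T : ℝ → ℝ := fun α => ∫ y in (-ℓ)..ℓ, Real.cosh (α * y) * w y with hT
  -- key integration by parts identity
  have key : ∀ α : ℝ, 0 < α →
      (∫ y in (-ℓ)..ℓ,
          (α / (2 * C * (Real.cosh (α * ℓ) - 1))) * Real.sinh (α * y) * v y)
        = (Real.cosh (α * ℓ) * (v ℓ - v (-ℓ)) - T α)
            / (2 * C * (Real.cosh (α * ℓ) - 1)) := by
    intro α hα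
    have hα' : α ≠ 0 := ne_of_gt hα
    have hone : 1 < Real.cosh (α * ℓ) := Real.one_lt_cosh.2 (by positivity)
    have hden0 : Real.cosh (α * ℓ) - 1 ≠ 0 := by intro h; nlinarith
    have hparts :
        ∫ y in (-ℓ)..ℓ, v y * Real.sinh (α * y)
          = v ℓ * (Real.cosh (α * ℓ) / α) - v (-ℓ) * (Real.cosh (α * (-ℓ)) / α)
            - ∫ y in (-ℓ)..ℓ, w y * (Real.cosh (α * y) / α) := by
      apply intervalIntegral.integral_mul_deriv_eq_deriv_mul_of_hasDerivWithinAt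
      · intro x hx
        rw [huIcc] at hx ⊢
        exact ((hv.differentiableOn one_ne_zero) x hx).hasDerivWithinAt
      · intro x hx
        have h1 : HasDerivAt (fun y : ℝ => α * y) α x := by
          simpa using (hasDerivAt_id x).const_mul α
        have h2 := ((Real.hasDerivAt_cosh (α * x)).comp x h1).div_const α
        have h3 : Real.sinh (α * x) * α / α = Real.sinh (α * x) := by field_simp
        rw [h3] at h2
        exact h2.hasDerivWithinAt
      · exact ContinuousOn.intervalIntegrable (by rw [huIcc]; exact hwc)
      · exact ((Real.continuous_sinh.comp (continuous_const.mul continuous_id)).intervalIntegrable _ _)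
    have hpull : (∫ y in (-ℓ)..ℓ,
          (α / (2 * C * (Real.cosh (α * ℓ) - 1))) * Real.sinh (α * y) * v y)
        = (α / (2 * C * (Real.cosh (α * ℓ) - 1))) *
            ∫ y in (-ℓ)..ℓ, v y * Real.sinh (α * y) := by
      rw [← intervalIntegral.integral_const_mul]
      congr 1; funext y; ring
    have hTα : (∫ y in (-ℓ)..ℓ, w y * (Real.cosh (α * y) / α)) = T α / α := by
      rw [hT, ← intervalIntegral.integral_div]
      congr 1; funext y; ring
    rw [hpull, hparts, hTα, mul_neg α ℓ, Real.cosh_neg]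
    field_simp
    -- fallback if ring insufficient handled below
  -- eventual equality
  have heq : (fun α : ℝ =>
      ∫ y in (-ℓ)..ℓ,
        (α / (2 * C * (Real.cosh (α * ℓ) - 1))) * Real.sinh (α * y) * v y)
      =ᶠ[atTop] fun α =>
        (Real.cosh (α * ℓ) * (v ℓ - v (-ℓ)) - T α)
          / (2 * C * (Real.cosh (α * ℓ) - 1)) := by
    filter_upwards [eventually_gt_atTop (0:ℝ)] with α hα using key α hα
  rw [tendsto_congr' heq]
  -- split into two pieces
  have hcoshTop : Tendsto (fun α : ℝ => Real.cosh (α * ℓ)) atTop atTop := by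
    have hg : Tendsto (fun x : ℝ => (x + 1) / 2) atTop atTop :=
      (tendsto_atTop_add_const_right atTop 1 tendsto_id).atTop_div_const two_pos
    have hcosh : Tendsto (fun x : ℝ => Real.cosh x) atTop atTop := by
      apply tendsto_atTop_mono _ hg
      intro x
      have h1 := Real.add_one_le_exp x
      have h2 : 0 < Real.exp (-x) := Real.exp_pos _
      rw [Real.cosh_eq]; linarith
    exact hcosh.comp (tendsto_id.atTop_mul_const hℓ)
  have hquot : Tendsto (fun x : ℝ => x / (x - 1)) atTop (nhds 1) := by
    have h0 : Tendsto (fun x : ℝ => (x - 1)⁻¹) atTop (nhds 0) :=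
      tendsto_inv_atTop_zero.comp (tendsto_atTop_add_const_right atTop (-1) tendsto_id)
    have h : Tendsto (fun x : ℝ => 1 + (x - 1)⁻¹) atTop (nhds (1 + 0)) := h0.const_add 1
    rw [add_zero] at h
    apply h.congr'
    filter_upwards [eventually_ge_atTop (2:ℝ)] with x hx
    have hne2 : x - 1 ≠ 0 := by intro h'; nlinarith
    field_simp
    ring
  -- first piece
  have hG : Tendsto (fun α : ℝ =>
      Real.cosh (α * ℓ) * (v ℓ - v (-ℓ)) / (2 * C * (Real.cosh (α * ℓ) - 1)))
      atTop (nhds ((v ℓ - v (-ℓ)) / (2 * C))) := by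
    have h1 : Tendsto (fun α : ℝ => Real.cosh (α * ℓ) / (Real.cosh (α * ℓ) - 1))
        atTop (nhds 1) := hquot.comp hcoshTop
    have h2 := h1.mul_const ((v ℓ - v (-ℓ)) / (2 * C))
    rw [one_mul] at h2
    apply h2.congr
    intro α
    field_simp
  -- second piece → 0
  have hH : Tendsto (fun α : ℝ => T α / (2 * C * (Real.cosh (α * ℓ) - 1)))
      atTop (nhds 0) := by
    apply squeeze_zero_norm' (a := fun α : ℝ => 2 * M / (C * α))
    · filter_upwards [eventually_ge_atTop (max 1 (3 / ℓ))] with α hα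
      have hα1 : (1:ℝ) ≤ α := le_trans (le_max_left _ _) hα
      have hα0 : 0 < α := lt_of_lt_of_le one_pos hα1
      have hαℓ : 3 ≤ α * ℓ := by
        have := le_trans (le_max_right _ _) hα
        rw [div_le_iff₀ hℓ] at this
        linarith
      have hcosh2 : 2 ≤ Real.cosh (α * ℓ) := by
        have h1 := Real.add_one_le_exp (α * ℓ)
        have h2 : 0 < Real.exp (-(α * ℓ)) := Real.exp_pos _
        rw [Real.cosh_eq]; linarith
      have hden : 0 < Real.cosh (α * ℓ) - 1 := by linarith
      -- bound on T
      have hsinh_nonneg : 0 ≤ Real.sinh (α * ℓ) := Real.sinh_nonneg_iff.2 (by positivity)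
      have hcoshint : (∫ y in (-ℓ)..ℓ, Real.cosh (α * y) * M)
          = (Real.sinh (α * ℓ) / α - Real.sinh (α * (-ℓ)) / α) * M := by
        rw [intervalIntegral.integral_mul_const]
        congr 1
        apply intervalIntegral.integral_eq_sub_of_hasDerivAt
        · intro x hx
          have h1 : HasDerivAt (fun y : ℝ => α * y) α x := by
            simpa using (hasDerivAt_id x).const_mul α
          have h2 := ((Real.hasDerivAt_sinh (α * x)).comp x h1).div_const α
          have h3 : Real.cosh (α * x) * α / α = Real.cosh (α * x) := by field_simp
          rwa [h3] at h2
        · exact (Real.continuous_cosh.comp (continuous_const.mul continuous_id)).intervalIntegrable _ _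
      have hTbound : |T α| ≤ 2 * Real.sinh (α * ℓ) / α * M := by
        have := intervalIntegral.norm_integral_le_abs_of_norm_le
          (a := -ℓ) (b := ℓ) (g := fun y => Real.cosh (α * y) * M) (μ := MeasureTheory.volume)
          (f := fun y => Real.cosh (α * y) * w y) ?_ ?_
        · rw [hT]
          refine le_trans this ?_
          rw [hcoshint, mul_neg, Real.sinh_neg, neg_div, sub_neg_eq_add]
          have h01 : 0 ≤ Real.sinh (α * ℓ) / α := div_nonneg hsinh_nonneg hα0.le
          rw [abs_of_nonneg (by nlinarith :
            (0:ℝ) ≤ (Real.sinh (α * ℓ) / α + Real.sinh (α * ℓ) / α) * M)]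
          apply le_of_eq; ring
        · filter_upwards [MeasureTheory.ae_restrict_mem measurableSet_uIoc] with t ht
          have ht' : t ∈ Set.Icc (-ℓ) ℓ := by
            rw [Set.uIoc_of_le hle] at ht
            exact ⟨le_of_lt ht.1, ht.2⟩
          rw [Real.norm_eq_abs, abs_mul, abs_of_nonneg (Real.cosh_pos _).le]
          exact mul_le_mul_of_nonneg_left (hM t ht') (Real.cosh_pos _).le
        · exact ((Real.continuous_cosh.comp (continuous_const.mul continuous_id)).mul
            continuous_const).intervalIntegrable _ _
      -- chain
      have hsc : Real.sinh (α * ℓ) ≤ Real.cosh (α * ℓ) := by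
        have := Real.cosh_sub_sinh (α * ℓ)
        have h2 : 0 < Real.exp (-(α * ℓ)) := Real.exp_pos _
        linarith
      have hc2 : Real.cosh (α * ℓ) ≤ 2 * (Real.cosh (α * ℓ) - 1) := by linarith
      rw [Real.norm_eq_abs, abs_div, abs_of_pos (by positivity : (0:ℝ) < 2 * C * (Real.cosh (α * ℓ) - 1))]
      rw [div_le_div_iff₀ (by positivity) (by positivity)]
      calc |T α| * (C * α) ≤ (2 * Real.sinh (α * ℓ) / α * M) * (C * α) := by
            apply mul_le_mul_of_nonneg_right hTbound (by positivity)
        _ = 2 * M * C * Real.sinh (α * ℓ) := by field_simp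
        _ ≤ 2 * M * C * (2 * (Real.cosh (α * ℓ) - 1)) := by
            apply mul_le_mul_of_nonneg_left (le_trans hsc hc2) (by positivity)
        _ = 2 * M * (2 * C * (Real.cosh (α * ℓ) - 1)) := by ring
    · have h0 : Tendsto (fun α : ℝ => α⁻¹) atTop (nhds 0) := tendsto_inv_atTop_zero
      have := h0.const_mul (2 * M / C)
      rw [mul_zero] at this
      apply this.congr
      intro α
      simp [div_eq_mul_inv, mul_inv]
      ring
  have := hG.sub hH
  rw [sub_zero] at this
  apply this.congr
  intro α
  rw [← sub_div]
end
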